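/- For a signed graph Σ on [n] with no positive loops and no free loops, χ_Σ(k) = Σ_{p ∈ P(Σ)} 2^{n-ρ(p)} (k)_{n-ρ(p)}, where P(Σ) = {p ∈ L(BC_n) : p does not lie above any hyperplane h_e^{ε(e)} for e ∈ E}, ρ is the rank function on L(BC_n), and (k)_i = k(k-1)⋯(k-i+1). -/

import Mathlib

open Equiv Finset

/-- A signed edge on vertex type `V`: a full edge (possibly a loop when the
endpoints agree), a half edge, or a free loop. The Bool `s` is the sign,
`true` meaning `+1` and `false` meaning `-1`. -/
inductive SEdge (V : Type*) where
  | full (i j : V) (s : Bool)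
  | half (i : V) (s : Bool)
  | free

/-- A signed graph: an index type of edges together with edge data. -/
structure SGraph (V : Type*) where
  E : Type
  edge : E → SEdge V

/-- Properness of a coloring at a single edge. -/
def properAt {V : Type*} (σ : V → ℤ) : SEdge V → Prop
  | .full i j s => σ i ≠ (if s then σ j else -σ j)
  | .half i _ => σ i ≠ 0
  | .free => False

/-- A proper signed `k`-coloring: values in `[-k,k] ∩ ℤ`, proper at every edge. -/
def Proper {V : Type*} (G : SGraph V) (k : ℕ) (σ : V → ℤ) : Prop :=
  (∀ i, |σ i| ≤ (k : ℤ)) ∧ ∀ e, properAt σ (G.edge e)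

/-- The signed chromatic polynomial evaluated at `k`. -/
noncomputable def chrom {V : Type*} (G : SGraph V) (k : ℕ) : ℕ :=
  Nat.card {σ : V → ℤ // Proper G k σ}

/-- The hyperplane (subset of `ℝⁿ`) attached to a signed edge. -/
def hypOfEdge {n : ℕ} : SEdge (Fin n) → Set (Fin n → ℝ)
  | .full i j s => {x | x i = if s then x j else -x j}
  | .half i _ => {x | x i = 0}
  | .free => Set.univ

/-- The signed graphic arrangement of `G`. -/
def arr {n : ℕ} (G : SGraph (Fin n)) : Set (Set (Fin n → ℝ)) :=
  {H | ∃ e, H = hypOfEdge (G.edge e)}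

/-- The action of a signed permutation `(b, δ)` on signed edges. -/
def actEdge {n : ℕ} (b : Equiv.Perm (Fin n)) (δ : Finset (Fin n)) :
    SEdge (Fin n) → SEdge (Fin n)
  | .full i j s => .full (b i) (b j)
      (xor s (decide (Odd ((({b i, b j} : Finset (Fin n))) ∩ δ).card)))
  | .half i s => .half (b i)
      (xor s (decide (Odd ((({b i} : Finset (Fin n))) ∩ δ).card)))
  | .free => .free

/-- `(b, δ)` is an automorphism of the signed graph `G`: it fixes the edge
multiset of `G`. -/
def IsAut {n : ℕ} (b : Equiv.Perm (Fin n)) (δ : Finset (Fin n)) (G : SGraph (Fin n)) : Prop :=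
  ∃ φ : Equiv.Perm G.E, ∀ e, G.edge (φ e) = actEdge b δ (G.edge e)

/-- The action of a signed permutation on points of `ℝⁿ` (coordinate form). -/
def actR {n : ℕ} (b : Equiv.Perm (Fin n)) (δ : Finset (Fin n)) (x : Fin n → ℝ) : Fin n → ℝ :=
  fun i => (if i ∈ δ then (-1 : ℝ) else 1) * x (b⁻¹ i)

/-- The action of a signed permutation on integer colorings. -/
def actZ {n : ℕ} (b : Equiv.Perm (Fin n)) (δ : Finset (Fin n)) (σ : Fin n → ℤ) : Fin n → ℤ :=
  fun i => (if i ∈ δ then (-1 : ℤ) else 1) * σ (b⁻¹ i)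

/-- The fixed flat `β̂` of the signed permutation `β = (b, δ)`. -/
def flatOf {n : ℕ} (b : Equiv.Perm (Fin n)) (δ : Finset (Fin n)) : Set (Fin n → ℝ) :=
  ⋂ i : Fin n, {x : Fin n → ℝ | x i = (if i ∈ δ then (-1 : ℝ) else 1) * x (b⁻¹ i)}

/-- The cycle (as a finset) of `b` containing `i`. -/
def cyc {n : ℕ} (b : Equiv.Perm (Fin n)) (i : Fin n) : Finset (Fin n) :=
  Finset.univ.filter (b.SameCycle i)

lemma mem_cyc_self {n : ℕ} (b : Equiv.Perm (Fin n)) (i : Fin n) : i ∈ cyc b i := by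
  simp [cyc, Equiv.Perm.SameCycle.refl]

/-- `|C_s ∩ δ|` is even, where `C_s` is the cycle of `i`. -/
def evenCyc {n : ℕ} (b : Equiv.Perm (Fin n)) (δ : Finset (Fin n)) (i : Fin n) : Prop :=
  Even ((cyc b i ∩ δ).card)

instance {n : ℕ} (b : Equiv.Perm (Fin n)) (δ : Finset (Fin n)) (i : Fin n) :
    Decidable (evenCyc b δ i) := by unfold evenCyc; infer_instance

/-- The minimal element of the cycle of `b` containing `i`. -/
def minCyc {n : ℕ} (b : Equiv.Perm (Fin n)) (i : Fin n) : Fin n :=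
  (cyc b i).min' ⟨i, mem_cyc_self b i⟩

lemma sameCycle_minCyc {n : ℕ} (b : Equiv.Perm (Fin n)) (i : Fin n) :
    b.SameCycle (minCyc b i) i := by
  have h : minCyc b i ∈ cyc b i := (cyc b i).min'_mem _
  simp only [cyc, Finset.mem_filter] at h
  exact h.2.symm

/-- The minimal positive `l` with `b^l(k) = i`, where `k` is the minimal
element of the cycle of `i`. -/
def pathLen {n : ℕ} (b : Equiv.Perm (Fin n)) (i : Fin n) : ℕ :=
  Nat.find (p := fun l => 0 < l ∧ (b ^ l) (minCyc b i) = i)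
    (by
      obtain ⟨l, hl, _, h⟩ := Equiv.Perm.SameCycle.exists_pow_eq b (sameCycle_minCyc b i)
      exact ⟨l, hl, h⟩)

/-- `β_(i) = |δ ∩ {b(k), b²(k), …, b^l(k) = i}|`. -/
def betaN {n : ℕ} (b : Equiv.Perm (Fin n)) (δ : Finset (Fin n)) (i : Fin n) : ℕ :=
  (((Finset.Icc 1 (pathLen b i)).image fun t => (b ^ t) (minCyc b i)) ∩ δ).card

/-- The vertex set of the quotient graph `Σ/β`: cycles of `b` having even
intersection with `δ`. -/
def QV {n : ℕ} (b : Equiv.Perm (Fin n)) (δ : Finset (Fin n)) : Type :=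
  {C : Finset (Fin n) // (∃ i, C = cyc b i) ∧ Even ((C ∩ δ).card)}

/-- The quotient vertex attached to `i ∈ [n]` whose cycle meets `δ` evenly. -/
def qv {n : ℕ} (b : Equiv.Perm (Fin n)) (δ : Finset (Fin n)) (i : Fin n)
    (h : evenCyc b δ i) : QV b δ := ⟨cyc b i, ⟨i, rfl⟩, h⟩

/-- The quotient of a signed edge by a signed permutation. -/
def quotEdge {n : ℕ} (b : Equiv.Perm (Fin n)) (δ : Finset (Fin n)) :
    SEdge (Fin n) → SEdge (QV b δ)
  | .free => .free
  | .half i s => if h : evenCyc b δ i then .half (qv b δ i h) s else .free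
  | .full i j s =>
      if _hij : b.SameCycle i j then
        if h : evenCyc b δ i then
          if i = j then .full (qv b δ i h) (qv b δ i h) s
          else .full (qv b δ i h) (qv b δ i h) false
        else .free
      else
        if hi : evenCyc b δ i then
          if hj : evenCyc b δ j then
            .full (qv b δ i hi) (qv b δ j hj)
              (xor s (decide (Odd (betaN b δ i + betaN b δ j))))
          else .half (qv b δ i hi) false
        else
          if hj : evenCyc b δ j then .half (qv b δ j hj) false else .free

/-- The quotient signed graph `Σ/β`. -/
def quotG {n : ℕ} (G : SGraph (Fin n)) (b : Equiv.Perm (Fin n)) (δ : Finset (Fin n)) :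
    SGraph (QV b δ) := ⟨G.E, fun e => quotEdge b δ (G.edge e)⟩

/-- `G` has no positive loops and no free loops. -/
def NoBadLoops {n : ℕ} (G : SGraph (Fin n)) : Prop :=
  ∀ e, (∀ i, G.edge e ≠ .full i i true) ∧ G.edge e ≠ .free

/-- The type-BC Coxeter arrangement in dimension `n`. -/
def BCn (n : ℕ) : Set (Set (Fin n → ℝ)) :=
  {H | (∃ i j : Fin n, i ≠ j ∧
      (H = {x | x i = x j} ∨ H = {x | x i = -x j})) ∨
    ∃ i : Fin n, H = {x | x i = 0}}

/-- A flat of the intersection lattice `L(BC_n)`: an intersection of a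
subcollection of the hyperplanes (the empty intersection being `ℝⁿ`). -/
def IsFlat (n : ℕ) (p : Set (Fin n → ℝ)) : Prop :=
  ∃ S ⊆ BCn n, p = ⋂₀ S

/-- The rank (codimension) of a flat. -/
noncomputable def rk (n : ℕ) (p : Set (Fin n → ℝ)) : ℕ :=
  n - Module.finrank ℝ (Submodule.span ℝ p)

/-- The complement of the signed graphic arrangement of `G`. -/
def compl {n : ℕ} (G : SGraph (Fin n)) : Set (Fin n → ℝ) :=
  {x | ∀ e, x ∉ hypOfEdge (G.edge e)}

/-- A region of the signed graphic arrangement: a connected component of the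
complement. -/
def IsRegion {n : ℕ} (G : SGraph (Fin n)) (r : Set (Fin n → ℝ)) : Prop :=
  ∃ x ∈ compl G, r = connectedComponentIn (compl G) x


namespace SChrom

open scoped Classical

variable {n : ℕ}

/-! ### Pointwise relations attached to a set `p ⊆ ℝⁿ` -/

def Rp (p : Set (Fin n → ℝ)) (i j : Fin n) : Prop := ∀ x ∈ p, x i = x j
def Rm (p : Set (Fin n → ℝ)) (i j : Fin n) : Prop := ∀ x ∈ p, x i = -x j

lemma Rp_refl (p : Set (Fin n → ℝ)) (i : Fin n) : Rp p i i := fun _ _ => rfl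

lemma Rp_symm {p : Set (Fin n → ℝ)} {i j : Fin n} (h : Rp p i j) : Rp p j i :=
  fun x hx => (h x hx).symm

lemma Rm_symm {p : Set (Fin n → ℝ)} {i j : Fin n} (h : Rm p i j) : Rm p j i :=
  fun x hx => by have := h x hx; linarith

lemma Rp_trans_Rp {p : Set (Fin n → ℝ)} {i j l : Fin n} (h : Rp p i j) (h' : Rp p j l) :
    Rp p i l := fun x hx => (h x hx).trans (h' x hx)

lemma Rp_trans_Rm {p : Set (Fin n → ℝ)} {i j l : Fin n} (h : Rp p i j) (h' : Rm p j l) :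
    Rm p i l := fun x hx => (h x hx).trans (h' x hx)

lemma Rm_trans_Rp {p : Set (Fin n → ℝ)} {i j l : Fin n} (h : Rm p i j) (h' : Rp p j l) :
    Rm p i l := fun x hx => by have := h x hx; have := h' x hx; linarith

lemma Rm_trans_Rm {p : Set (Fin n → ℝ)} {i j l : Fin n} (h : Rm p i j) (h' : Rm p j l) :
    Rp p i l := fun x hx => by have := h x hx; have := h' x hx; linarith

lemma Rm_self_of_both {p : Set (Fin n → ℝ)} {i j : Fin n} (h : Rp p i j) (h' : Rm p i j) :
    Rm p i i := fun x hx => by have := h x hx; have := h' x hx; linarith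

lemma zero_of_Rm {p : Set (Fin n → ℝ)} {i : Fin n} (h : Rm p i i) {x : Fin n → ℝ}
    (hx : x ∈ p) : x i = 0 := by have := h x hx; linarith

lemma Rm_diag_of_Rp {p : Set (Fin n → ℝ)} {i j : Fin n} (h : Rp p i j) (hz : Rm p i i) :
    Rm p j j := fun x hx => by
  have h1 := h x hx; have h2 := zero_of_Rm hz hx; linarith

lemma Rm_diag_of_Rm {p : Set (Fin n → ℝ)} {i j : Fin n} (h : Rm p i j) (hz : Rm p i i) :
    Rm p j j := fun x hx => by
  have h1 := h x hx; have h2 := zero_of_Rm hz hx; linarith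

def rel (p : Set (Fin n → ℝ)) (i j : Fin n) : Prop := Rp p i j ∨ Rm p i j

lemma rel_refl (p : Set (Fin n → ℝ)) (i : Fin n) : rel p i i := Or.inl (Rp_refl p i)

lemma rel_symm {p : Set (Fin n → ℝ)} {i j : Fin n} (h : rel p i j) : rel p j i :=
  h.elim (fun h => Or.inl (Rp_symm h)) (fun h => Or.inr (Rm_symm h))

lemma rel_trans {p : Set (Fin n → ℝ)} {i j l : Fin n} (h : rel p i j) (h' : rel p j l) :
    rel p i l := by
  rcases h with h | h <;> rcases h' with h' | h'
  exacts [Or.inl (Rp_trans_Rp h h'), Or.inr (Rp_trans_Rm h h'),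
    Or.inr (Rm_trans_Rp h h'), Or.inl (Rm_trans_Rm h h')]

/-! ### Classes and representatives -/

noncomputable def cls (p : Set (Fin n → ℝ)) (i : Fin n) : Finset (Fin n) :=
  univ.filter (rel p i)

lemma mem_cls {p : Set (Fin n → ℝ)} {i j : Fin n} : j ∈ cls p i ↔ rel p i j := by
  simp [cls]

noncomputable def rep (p : Set (Fin n → ℝ)) (i : Fin n) : Fin n :=
  (cls p i).min' ⟨i, mem_cls.2 (rel_refl p i)⟩

lemma rel_rep (p : Set (Fin n → ℝ)) (i : Fin n) : rel p i (rep p i) :=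
  mem_cls.1 ((cls p i).min'_mem _)

lemma cls_eq {p : Set (Fin n → ℝ)} {i j : Fin n} (h : rel p i j) : cls p i = cls p j := by
  ext a
  simp only [mem_cls]
  exact ⟨fun h' => rel_trans (rel_symm h) h', fun h' => rel_trans h h'⟩

lemma rep_eq {p : Set (Fin n → ℝ)} {i j : Fin n} (h : rel p i j) : rep p i = rep p j := by
  have hc := cls_eq h
  apply le_antisymm
  · exact Finset.min'_le _ _ (by rw [hc]; exact (cls p j).min'_mem _)
  · exact Finset.min'_le _ _ (by rw [← hc]; exact (cls p i).min'_mem _)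

lemma not_Rm_rep {p : Set (Fin n → ℝ)} {i : Fin n} (hi : ¬ Rm p i i) :
    ¬ Rm p (rep p i) (rep p i) := by
  intro h
  rcases rel_rep p i with h' | h'
  · exact hi (Rm_diag_of_Rp (Rp_symm h') h)
  · exact hi (Rm_diag_of_Rm (Rm_symm h') h)

noncomputable def reps (p : Set (Fin n → ℝ)) : Finset (Fin n) :=
  univ.filter (fun i => ¬ Rm p i i ∧ rep p i = i)

lemma mem_reps {p : Set (Fin n → ℝ)} {i : Fin n} :
    i ∈ reps p ↔ ¬ Rm p i i ∧ rep p i = i := by simp [reps]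

lemma rep_mem_reps {p : Set (Fin n → ℝ)} {i : Fin n} (hi : ¬ Rm p i i) :
    rep p i ∈ reps p :=
  mem_reps.2 ⟨not_Rm_rep hi, (rep_eq (rel_rep p i)).symm⟩

lemma not_both {p : Set (Fin n → ℝ)} {i : Fin n} (hi : ¬ Rm p i i) :
    ¬ (Rp p i (rep p i) ∧ Rm p i (rep p i)) :=
  fun h => hi (Rm_self_of_both h.1 h.2)

lemma sign_Rp {p : Set (Fin n → ℝ)} {i j : Fin n} (h : Rp p i j) :
    (Rp p i (rep p i) ↔ Rp p j (rep p j)) := by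
  have hr : rep p i = rep p j := rep_eq (Or.inl h)
  constructor
  · intro hp; rw [← hr]; exact Rp_trans_Rp (Rp_symm h) hp
  · intro hp; rw [hr]; exact Rp_trans_Rp h hp

lemma sign_Rm {p : Set (Fin n → ℝ)} {i j : Fin n} (hi : ¬ Rm p i i) (h : Rm p i j) :
    (Rp p i (rep p i) ↔ ¬ Rp p j (rep p j)) := by
  have hr : rep p i = rep p j := rep_eq (Or.inr h)
  constructor
  · intro hp hq
    have hm : Rm p i (rep p i) := by rw [hr]; exact Rm_trans_Rp h hq
    exact not_both hi ⟨hp, hm⟩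
  · intro hq
    have h1 : Rm p j (rep p j) := (rel_rep p j).resolve_left hq
    rw [hr]
    exact Rm_trans_Rm h h1

/-! ### The canonical builder -/

noncomputable def bld {α : Type*} [Ring α] (p : Set (Fin n → ℝ)) (f : Fin n → α)
    (i : Fin n) : α :=
  if Rm p i i then 0 else (if Rp p i (rep p i) then 1 else -1) * f (rep p i)

lemma bld_of_mem_reps {α : Type*} [Ring α] {p : Set (Fin n → ℝ)} (f : Fin n → α)
    {a : Fin n} (ha : a ∈ reps p) : bld p f a = f a := by
  obtain ⟨h1, h2⟩ := mem_reps.1 ha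
  unfold bld
  rw [if_neg h1, h2, if_pos (Rp_refl p a), one_mul]

lemma bld_Rp {α : Type*} [Ring α] {p : Set (Fin n → ℝ)} {f : Fin n → α} {i j : Fin n}
    (h : Rp p i j) : bld p f i = bld p f j := by
  unfold bld
  by_cases hz : Rm p i i
  · rw [if_pos hz, if_pos (Rm_diag_of_Rp h hz)]
  · have hzj : ¬ Rm p j j := fun hj => hz (Rm_diag_of_Rp (Rp_symm h) hj)
    rw [if_neg hz, if_neg hzj]
    have hr : rep p i = rep p j := rep_eq (Or.inl h)
    have hs := sign_Rp (p := p) h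
    rw [hr] at hs ⊢
    exact congrArg (· * f (rep p j)) (if_congr hs rfl rfl)

lemma bld_Rm {α : Type*} [Ring α] {p : Set (Fin n → ℝ)} {f : Fin n → α} {i j : Fin n}
    (h : Rm p i j) : bld p f i = - bld p f j := by
  unfold bld
  by_cases hz : Rm p i i
  · rw [if_pos hz, if_pos (Rm_diag_of_Rm h hz), neg_zero]
  · have hzj : ¬ Rm p j j := fun hj => hz (Rm_diag_of_Rm (Rm_symm h) hj)
    rw [if_neg hz, if_neg hzj]
    have hs := sign_Rm hz h
    have hr : rep p i = rep p j := rep_eq (Or.inr h)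
    rw [hr] at hs ⊢
    rw [← neg_mul]
    refine congrArg (· * f (rep p j)) ?_
    by_cases hp : Rp p j (rep p j)
    · rw [if_pos hp, if_neg (fun hq => (hs.mp hq) hp)]
    · rw [if_neg hp, if_pos (hs.mpr hp), neg_neg]

lemma bld_congr {α : Type*} [Ring α] {p : Set (Fin n → ℝ)} {f g : Fin n → α}
    (h : ∀ a ∈ reps p, f a = g a) : bld p f = bld p g := by
  funext i
  unfold bld
  by_cases hz : Rm p i i
  · rw [if_pos hz, if_pos hz]
  · rw [if_neg hz, if_neg hz, h _ (rep_mem_reps hz)]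

lemma Rp_of_bld {p : Set (Fin n → ℝ)} {f : Fin n → ℤ}
    (Hnz : ∀ a ∈ reps p, f a ≠ 0)
    (Hinj : ∀ a ∈ reps p, ∀ b ∈ reps p, (f a).natAbs = (f b).natAbs → a = b)
    {i j : Fin n} (h : bld p f i = bld p f j) : Rp p i j := by
  by_cases hzi : Rm p i i <;> by_cases hzj : Rm p j j
  · exact fun x hx => by rw [zero_of_Rm hzi hx, zero_of_Rm hzj hx]
  · exfalso
    unfold bld at h
    rw [if_pos hzi, if_neg hzj] at h
    have hne : f (rep p j) ≠ 0 := Hnz _ (rep_mem_reps hzj)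
    by_cases hp : Rp p j (rep p j)
    · rw [if_pos hp, one_mul] at h; exact hne h.symm
    · rw [if_neg hp, neg_one_mul] at h; omega
  · exfalso
    unfold bld at h
    rw [if_pos hzj, if_neg hzi] at h
    have hne : f (rep p i) ≠ 0 := Hnz _ (rep_mem_reps hzi)
    by_cases hp : Rp p i (rep p i)
    · rw [if_pos hp, one_mul] at h; exact hne h
    · rw [if_neg hp, neg_one_mul] at h; omega
  · unfold bld at h
    rw [if_neg hzi, if_neg hzj] at h
    have hriM := rep_mem_reps hzi
    have hrjM := rep_mem_reps hzj
    have hfne : f (rep p i) ≠ 0 := Hnz _ hriM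
    by_cases h1 : Rp p i (rep p i) <;> by_cases h2 : Rp p j (rep p j)
    · rw [if_pos h1, one_mul, if_pos h2, one_mul] at h
      have hrr : rep p i = rep p j := Hinj _ hriM _ hrjM (by omega)
      have h1' : Rp p i (rep p j) := by rw [← hrr]; exact h1
      exact Rp_trans_Rp h1' (Rp_symm h2)
    · exfalso
      rw [if_pos h1, one_mul, if_neg h2, neg_one_mul] at h
      have hrr : rep p i = rep p j := Hinj _ hriM _ hrjM (by omega)
      rw [hrr] at h hfne
      omega
    · exfalso
      rw [if_neg h1, neg_one_mul, if_pos h2, one_mul] at h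
      have hrr : rep p i = rep p j := Hinj _ hriM _ hrjM (by omega)
      rw [hrr] at h hfne
      omega
    · rw [if_neg h1, neg_one_mul, if_neg h2, neg_one_mul, neg_inj] at h
      have hrr : rep p i = rep p j := Hinj _ hriM _ hrjM (by omega)
      have hmi : Rm p i (rep p i) := (rel_rep p i).resolve_left h1
      have hmj : Rm p j (rep p j) := (rel_rep p j).resolve_left h2
      have hmi' : Rm p i (rep p j) := by rw [← hrr]; exact hmi
      exact Rm_trans_Rm hmi' (Rm_symm hmj)

lemma Rm_of_bld {p : Set (Fin n → ℝ)} {f : Fin n → ℤ}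
    (Hnz : ∀ a ∈ reps p, f a ≠ 0)
    (Hinj : ∀ a ∈ reps p, ∀ b ∈ reps p, (f a).natAbs = (f b).natAbs → a = b)
    {i j : Fin n} (h : bld p f i = - bld p f j) : Rm p i j := by
  by_cases hzi : Rm p i i <;> by_cases hzj : Rm p j j
  · exact fun x hx => by rw [zero_of_Rm hzi hx, zero_of_Rm hzj hx, neg_zero]
  · exfalso
    unfold bld at h
    rw [if_pos hzi, if_neg hzj] at h
    have hne : f (rep p j) ≠ 0 := Hnz _ (rep_mem_reps hzj)
    by_cases hp : Rp p j (rep p j)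
    · rw [if_pos hp, one_mul] at h; omega
    · rw [if_neg hp, neg_one_mul, neg_neg] at h; exact hne h.symm
  · exfalso
    unfold bld at h
    rw [if_pos hzj, if_neg hzi, neg_zero] at h
    have hne : f (rep p i) ≠ 0 := Hnz _ (rep_mem_reps hzi)
    by_cases hp : Rp p i (rep p i)
    · rw [if_pos hp, one_mul] at h; exact hne h
    · rw [if_neg hp, neg_one_mul] at h; omega
  · unfold bld at h
    rw [if_neg hzi, if_neg hzj] at h
    have hriM := rep_mem_reps hzi
    have hrjM := rep_mem_reps hzj
    have hfne : f (rep p i) ≠ 0 := Hnz _ hriM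
    by_cases h1 : Rp p i (rep p i) <;> by_cases h2 : Rp p j (rep p j)
    · exfalso
      rw [if_pos h1, one_mul, if_pos h2, one_mul] at h
      have hrr : rep p i = rep p j := Hinj _ hriM _ hrjM (by omega)
      rw [hrr] at h hfne
      omega
    · rw [if_pos h1, one_mul, if_neg h2, neg_one_mul, neg_neg] at h
      have hrr : rep p i = rep p j := Hinj _ hriM _ hrjM (by omega)
      have hmj : Rm p j (rep p j) := (rel_rep p j).resolve_left h2
      have h1' : Rp p i (rep p j) := by rw [← hrr]; exact h1
      exact Rp_trans_Rm h1' (Rm_symm hmj)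
    · rw [if_neg h1, neg_one_mul, if_pos h2, one_mul, neg_inj] at h
      have hrr : rep p i = rep p j := Hinj _ hriM _ hrjM (by omega)
      have hmi : Rm p i (rep p i) := (rel_rep p i).resolve_left h1
      have hmi' : Rm p i (rep p j) := by rw [← hrr]; exact hmi
      exact Rm_trans_Rp hmi' (Rp_symm h2)
    · exfalso
      rw [if_neg h1, neg_one_mul, if_neg h2, neg_one_mul, neg_neg] at h
      have hrr : rep p i = rep p j := Hinj _ hriM _ hrjM (by omega)
      rw [hrr] at h hfne
      omega

/-! ### Good colorings -/

def Good (p : Set (Fin n → ℝ)) (σ : Fin n → ℤ) : Prop :=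
  ∀ i j, (σ i = σ j ↔ Rp p i j) ∧ (σ i = -σ j ↔ Rm p i j)

lemma good_bld {p : Set (Fin n → ℝ)} {f : Fin n → ℤ}
    (Hnz : ∀ a ∈ reps p, f a ≠ 0)
    (Hinj : ∀ a ∈ reps p, ∀ b ∈ reps p, (f a).natAbs = (f b).natAbs → a = b) :
    Good p (bld p f) := fun i j =>
  ⟨⟨fun h => Rp_of_bld Hnz Hinj h, fun h => bld_Rp h⟩,
   ⟨fun h => Rm_of_bld Hnz Hinj h, fun h => bld_Rm h⟩⟩

lemma good_eq_bld {p : Set (Fin n → ℝ)} {σ : Fin n → ℤ} (h : Good p σ) : σ = bld p σ := by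
  funext i
  unfold bld
  by_cases hz : Rm p i i
  · rw [if_pos hz]
    have := ((h i i).2).mpr hz
    omega
  · rw [if_neg hz]
    by_cases hp : Rp p i (rep p i)
    · rw [if_pos hp, one_mul]
      exact ((h i (rep p i)).1).mpr hp
    · have hm : Rm p i (rep p i) := (rel_rep p i).resolve_left hp
      rw [if_neg hp, neg_one_mul]
      have := ((h i (rep p i)).2).mpr hm
      omega

lemma good_ne_zero {p : Set (Fin n → ℝ)} {σ : Fin n → ℤ} (h : Good p σ) {a : Fin n}
    (ha : a ∈ reps p) : σ a ≠ 0 := by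
  intro h0
  exact (mem_reps.1 ha).1 (((h a a).2).mp (by omega))

/-! ### Counting good colorings in a box -/

lemma count_good (p : Set (Fin n → ℝ)) (k : ℕ) :
    ((Fintype.piFinset fun _ : Fin n => Finset.Icc (-(k : ℤ)) (k : ℤ)).filter
        fun σ => Good p σ).card
      = 2 ^ (reps p).card * Nat.descFactorial k (reps p).card := by
  classical
  set Ω : Finset (Fin n → ℤ) := Fintype.piFinset fun _ : Fin n => Finset.Icc (-(k : ℤ)) (k : ℤ)
    with hΩdef
  have memΩ : ∀ σ : Fin n → ℤ, σ ∈ Ω ↔ ∀ i, -(k : ℤ) ≤ σ i ∧ σ i ≤ k := by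
    intro σ
    simp [hΩdef, Fintype.mem_piFinset, Finset.mem_Icc]
  have hbound : ∀ σ : Fin n → ℤ, σ ∈ Ω.filter (fun σ => Good p σ) → ∀ a, a ∈ reps p →
      1 ≤ (σ a).natAbs ∧ (σ a).natAbs ≤ k := by
    intro σ hσ a ha
    rw [Finset.mem_filter] at hσ
    have h1 := good_ne_zero hσ.2 ha
    have h2 := (memΩ σ).1 hσ.1 a
    omega
  let g : (↥(reps p) → Bool) → (↥(reps p) ↪ Fin k) → Fin n → ℤ := fun s e i =>
    if h : i ∈ reps p then (if s ⟨i, h⟩ then 1 else -1) * (((e ⟨i, h⟩ : Fin k) : ℕ) + 1 : ℤ)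
    else 0
  have hg_reps : ∀ s e a (h : a ∈ reps p),
      g s e a = (if s ⟨a, h⟩ then 1 else -1) * (((e ⟨a, h⟩ : Fin k) : ℕ) + 1 : ℤ) := by
    intro s e a h
    simp only [g, dif_pos h]
  have hg_abs : ∀ s e a (h : a ∈ reps p),
      (g s e a).natAbs = ((e ⟨a, h⟩ : Fin k) : ℕ) + 1 := by
    intro s e a h
    rw [hg_reps s e a h]
    by_cases hs : s ⟨a, h⟩ = true
    · rw [if_pos hs, one_mul]; omega
    · rw [if_neg hs, neg_one_mul]; omega
  have hg_nz : ∀ s e a, a ∈ reps p → g s e a ≠ 0 := by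
    intro s e a h
    have := hg_abs s e a h
    omega
  have hg_inj : ∀ s e, ∀ a ∈ reps p, ∀ b ∈ reps p,
      (g s e a).natAbs = (g s e b).natAbs → a = b := by
    intro s e a ha b hb h
    rw [hg_abs s e a ha, hg_abs s e b hb] at h
    have he : e ⟨a, ha⟩ = e ⟨b, hb⟩ := Fin.ext (by omega)
    have := e.injective he
    exact Subtype.ext_iff.1 this
  have hmemg : ∀ s e, bld p (g s e) ∈ Ω.filter (fun σ => Good p σ) := by
    intro s e
    rw [Finset.mem_filter]
    constructor
    · rw [memΩ]
      intro i
      have habs : (bld p (g s e) i).natAbs ≤ k := by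
        unfold bld
        by_cases hz : Rm p i i
        · rw [if_pos hz]; omega
        · rw [if_neg hz]
          have hr := rep_mem_reps hz
          have h1 := hg_abs s e _ hr
          have h2 : ((e ⟨rep p i, hr⟩ : Fin k) : ℕ) < k := (e ⟨rep p i, hr⟩).2
          by_cases hp' : Rp p i (rep p i)
          · rw [if_pos hp', one_mul]; omega
          · rw [if_neg hp', neg_one_mul]; omega
      omega
    · exact good_bld (fun a ha => hg_nz s e a ha) (hg_inj s e)
  have e : {σ // σ ∈ Ω.filter fun σ => Good p σ} ≃ ((↥(reps p) → Bool) × (↥(reps p) ↪ Fin k)) := by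
    refine
      { toFun := fun σ => ⟨fun a => decide (0 < σ.1 a.1),
          ⟨fun a => ⟨(σ.1 a.1).natAbs - 1, by
              have := hbound σ.1 σ.2 a.1 a.2; omega⟩, ?_⟩⟩
        invFun := fun se => ⟨bld p (g se.1 se.2), hmemg se.1 se.2⟩
        left_inv := ?_
        right_inv := ?_ }
    · -- injectivity of the value embedding
      intro a b hab
      simp only [Fin.mk.injEq] at hab
      have ha := hbound σ.1 σ.2 a.1 a.2
      have hb := hbound σ.1 σ.2 b.1 b.2
      have hgood := (Finset.mem_filter.1 σ.2).2
      have hor : σ.1 a.1 = σ.1 b.1 ∨ σ.1 a.1 = -σ.1 b.1 := by omega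
      have hrel : rel p a.1 b.1 := by
        rcases hor with h | h
        · exact Or.inl (((hgood a.1 b.1).1).mp h)
        · exact Or.inr (((hgood a.1 b.1).2).mp h)
      have h1 := mem_reps.1 a.2
      have h2 := mem_reps.1 b.2
      have hre := rep_eq hrel
      apply Subtype.ext
      rw [← h1.2, ← h2.2, hre]
    · -- left inverse
      intro σ
      apply Subtype.ext
      have hgood := (Finset.mem_filter.1 σ.2).2
      refine Eq.trans (bld_congr ?_) (good_eq_bld hgood).symm
      intro a ha
      rw [hg_reps _ _ a ha]
      simp only [Function.Embedding.coeFn_mk]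
      have hb := hbound σ.1 σ.2 a ha
      by_cases h0 : 0 < σ.1 a
      · rw [if_pos (by simpa using h0), one_mul]
        show (((σ.1 a).natAbs - 1 : ℕ) : ℤ) + 1 = _
        omega
      · rw [if_neg (by simpa using h0), neg_one_mul]
        show -((((σ.1 a).natAbs - 1 : ℕ) : ℤ) + 1) = _
        omega
    · -- right inverse
      rintro ⟨s, e⟩
      have h1 : ∀ a : ↥(reps p), bld p (g s e) a.1 = g s e a.1 :=
        fun a => bld_of_mem_reps _ a.2
      have hval : ∀ a : ↥(reps p),
          bld p (g s e) a.1 = (if s a then 1 else -1) * (((e a : Fin k) : ℕ) + 1 : ℤ) := by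
        intro a
        rw [h1 a, hg_reps s e a.1 a.2]
      refine Prod.ext ?_ ?_
      · funext a
        show decide (0 < bld p (g s e) a.1) = s a
        have hv := hval a
        by_cases hs : s a = true
        · rw [if_pos hs, one_mul] at hv
          rw [hs]
          exact decide_eq_true (by omega)
        · rw [if_neg hs, neg_one_mul] at hv
          rw [Bool.eq_false_iff.2 hs]
          exact decide_eq_false (by omega)
      · apply DFunLike.ext
        intro a
        apply Fin.ext
        show (bld p (g s e) a.1).natAbs - 1 = ((e a : Fin k) : ℕ)
        have hv := hval a
        by_cases hs : s a = true
        · rw [if_pos hs, one_mul] at hv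
          omega
        · rw [if_neg hs, neg_one_mul] at hv
          omega
  calc (Ω.filter fun σ => Good p σ).card
      = Fintype.card {σ // σ ∈ Ω.filter fun σ => Good p σ} := (Fintype.card_coe _).symm
    _ = Fintype.card ((↥(reps p) → Bool) × (↥(reps p) ↪ Fin k)) := Fintype.card_congr e
    _ = 2 ^ (reps p).card * Nat.descFactorial k (reps p).card := by
        rw [Fintype.card_prod, Fintype.card_embedding_eq, Fintype.card_fin,
          Fintype.card_fun, Fintype.card_bool, Fintype.card_coe]

/-! ### The submodule attached to `p` and the rank computation -/

def flatSub (p : Set (Fin n → ℝ)) : Submodule ℝ (Fin n → ℝ) where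
  carrier := {x | ∀ i j, (Rp p i j → x i = x j) ∧ (Rm p i j → x i = -x j)}
  add_mem' := by
    intro a b ha hb
    intro i j
    constructor
    · intro h
      have h1 := (ha i j).1 h
      have h2 := (hb i j).1 h
      simp only [Pi.add_apply]
      linarith
    · intro h
      have h1 := (ha i j).2 h
      have h2 := (hb i j).2 h
      simp only [Pi.add_apply]
      linarith
  zero_mem' := by
    intro i j
    constructor <;> intro _ <;> simp
  smul_mem' := by
    intro c a ha
    intro i j
    constructor
    · intro h
      have h1 := (ha i j).1 h
      simp only [Pi.smul_apply, smul_eq_mul]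
      rw [h1]
    · intro h
      have h1 := (ha i j).2 h
      simp only [Pi.smul_apply, smul_eq_mul]
      rw [h1]
      ring

lemma mem_flatSub {p : Set (Fin n → ℝ)} {x : Fin n → ℝ} :
    x ∈ flatSub p ↔ ∀ i j, (Rp p i j → x i = x j) ∧ (Rm p i j → x i = -x j) := Iff.rfl

lemma flat_eq_flatSub {p : Set (Fin n → ℝ)} (hp : IsFlat n p) : p = ↑(flatSub p) := by
  obtain ⟨S, hS, rfl⟩ := hp
  ext x
  constructor
  · intro hx
    exact fun i j => ⟨fun h => h x hx, fun h => h x hx⟩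
  · intro hx
    rw [Set.mem_sInter]
    intro H hH
    rcases hS hH with ⟨i, j, hij, hH' | hH'⟩ | ⟨i, hH'⟩
    · subst hH'
      exact (hx i j).1 (fun y hy => Set.mem_sInter.1 hy _ hH)
    · subst hH'
      exact (hx i j).2 (fun y hy => Set.mem_sInter.1 hy _ hH)
    · subst hH'
      have hRm : Rm (⋂₀ S) i i := by
        intro y hy
        have : y i = 0 := Set.mem_sInter.1 hy _ hH
        linarith
      have := (hx i i).2 hRm
      show x i = 0
      linarith

noncomputable def resMap (p : Set (Fin n → ℝ)) : flatSub p →ₗ[ℝ] (↥(reps p) → ℝ) where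
  toFun x := fun a => x.1 a.1
  map_add' x y := rfl
  map_smul' c x := rfl

lemma resMap_bijective (p : Set (Fin n → ℝ)) : Function.Bijective (resMap p) := by
  constructor
  · intro x y hxy
    have hsub : resMap p (x - y) = 0 := by
      rw [map_sub, hxy, sub_self]
    have hz : x - y = 0 := by
      have hmem := (x - y).2
      rw [mem_flatSub] at hmem
      apply Subtype.ext
      funext i
      show (x - y).1 i = 0
      by_cases hz : Rm p i i
      · have := (hmem i i).2 hz
        linarith
      · rcases rel_rep p i with h | h
        · have h1 := (hmem i (rep p i)).1 h
          have h2 : (x - y).1 (rep p i) = 0 := congrFun hsub ⟨rep p i, rep_mem_reps hz⟩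
          rw [h1, h2]
        · have h1 := (hmem i (rep p i)).2 h
          have h2 : (x - y).1 (rep p i) = 0 := congrFun hsub ⟨rep p i, rep_mem_reps hz⟩
          rw [h1, h2, neg_zero]
    exact sub_eq_zero.1 hz
  · intro y
    set f0 : Fin n → ℝ := fun i => if h : i ∈ reps p then y ⟨i, h⟩ else 0 with hf0
    refine ⟨⟨bld p f0, ?_⟩, ?_⟩
    · rw [mem_flatSub]
      exact fun i j => ⟨fun h => bld_Rp h, fun h => bld_Rm h⟩
    · funext a
      show bld p f0 a.1 = y a
      rw [bld_of_mem_reps _ a.2]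
      show dite (a.1 ∈ reps p) (fun h => y ⟨a.1, h⟩) (fun _ => (0 : ℝ)) = y a
      rw [dif_pos a.2]

lemma rank_eq {p : Set (Fin n → ℝ)} (hp : IsFlat n p) : n - rk n p = (reps p).card := by
  have h1 : Submodule.span ℝ p = flatSub p := by
    conv_lhs => rw [flat_eq_flatSub hp]
    exact Submodule.span_eq _
  have h2 : Module.finrank ℝ (Submodule.span ℝ p) = (reps p).card := by
    rw [h1]
    have := LinearEquiv.finrank_eq (LinearEquiv.ofBijective (resMap p) (resMap_bijective p))
    rw [this, Module.finrank_fintype_fun_eq_card, Fintype.card_coe]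
  have h3 : Module.finrank ℝ (Submodule.span ℝ p) ≤ n := by
    have h4 := Submodule.finrank_le (Submodule.span ℝ (M := Fin n → ℝ) p)
    rwa [Module.finrank_fintype_fun_eq_card, Fintype.card_fin] at h4
  rw [rk]
  omega

/-! ### The flat attached to a coloring -/

def castR (σ : Fin n → ℤ) : Fin n → ℝ := fun i => (σ i : ℝ)

@[simp] lemma castR_apply (σ : Fin n → ℤ) (i : Fin n) : castR σ i = (σ i : ℝ) := rfl

def Pset (σ : Fin n → ℤ) : Set (Fin n → ℝ) := ⋂₀ {H | H ∈ BCn n ∧ castR σ ∈ H}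

lemma Pset_isFlat (σ : Fin n → ℤ) : IsFlat n (Pset σ) := ⟨_, fun _ hH => hH.1, rfl⟩

lemma castR_mem_Pset (σ : Fin n → ℤ) : castR σ ∈ Pset σ := by
  rw [Pset, Set.mem_sInter]
  rintro H ⟨_, h⟩
  exact h

lemma mem_Pset {σ : Fin n → ℤ} {x : Fin n → ℝ} :
    x ∈ Pset σ ↔ (∀ i j, σ i = σ j → x i = x j) ∧ (∀ i j, σ i = -σ j → x i = -x j) := by
  constructor
  · intro hx
    rw [Pset, Set.mem_sInter] at hx
    constructor
    · intro i j h
      by_cases hij : i = j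
      · subst hij; rfl
      · exact hx {y | y i = y j}
          ⟨Or.inl ⟨i, j, hij, Or.inl rfl⟩, show (σ i : ℝ) = (σ j : ℝ) by exact_mod_cast h⟩
    · intro i j h
      by_cases hij : i = j
      · subst hij
        have h0 : σ i = 0 := by omega
        have hxi : x i = 0 := hx {y | y i = 0}
          ⟨Or.inr ⟨i, rfl⟩, show (σ i : ℝ) = 0 by exact_mod_cast h0⟩
        rw [hxi, neg_zero]
      · exact hx {y | y i = -y j}
          ⟨Or.inl ⟨i, j, hij, Or.inr rfl⟩,
            show (σ i : ℝ) = -(σ j : ℝ) by exact_mod_cast h⟩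
  · intro hx
    rw [Pset, Set.mem_sInter]
    rintro H ⟨hH, hσ⟩
    rcases hH with ⟨i, j, hij, rfl | rfl⟩ | ⟨i, rfl⟩
    · have h : σ i = σ j := by
        have : (σ i : ℝ) = (σ j : ℝ) := hσ
        exact_mod_cast this
      exact hx.1 i j h
    · have h : σ i = -σ j := by
        have : (σ i : ℝ) = -(σ j : ℝ) := hσ
        exact_mod_cast this
      exact hx.2 i j h
    · have h0 : σ i = 0 := by
        have : (σ i : ℝ) = 0 := hσ
        exact_mod_cast this
      have := hx.2 i i (by omega)
      show x i = 0
      linarith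

lemma Pset_eq_iff {σ : Fin n → ℤ} {p : Set (Fin n → ℝ)} (hp : IsFlat n p) :
    Pset σ = p ↔ Good p σ := by
  constructor
  · intro h i j
    have hmem : castR σ ∈ p := h ▸ castR_mem_Pset σ
    constructor
    · constructor
      · intro hσ x hx
        rw [← h] at hx
        exact (mem_Pset.1 hx).1 i j hσ
      · intro hR
        have := hR (castR σ) hmem
        simp only [castR_apply] at this
        exact_mod_cast this
    · constructor
      · intro hσ x hx
        rw [← h] at hx
        exact (mem_Pset.1 hx).2 i j hσ
      · intro hR
        have := hR (castR σ) hmem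
        simp only [castR_apply] at this
        exact_mod_cast this
  · intro hg
    ext x
    rw [mem_Pset]
    constructor
    · intro hx
      rw [flat_eq_flatSub hp, SetLike.mem_coe, mem_flatSub]
      intro i j
      exact ⟨fun hR => hx.1 i j (((hg i j).1).mpr hR),
        fun hR => hx.2 i j (((hg i j).2).mpr hR)⟩
    · intro hx
      exact ⟨fun i j h => ((hg i j).1).mp h x hx, fun i j h => ((hg i j).2).mp h x hx⟩

end SChrom

theorem chrom_eq_sum_over_ideal {n k : ℕ} (G : SGraph (Fin n))
    (hG : NoBadLoops G)
    (F : Finset (Set (Fin n → ℝ)))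
    (hF : ∀ p, p ∈ F ↔ (IsFlat n p ∧ ∀ e, ¬ p ⊆ hypOfEdge (G.edge e))) :
    chrom G k = ∑ p ∈ F, 2 ^ (n - rk n p) * Nat.descFactorial k (n - rk n p) := by
  classical
  set Ω : Finset (Fin n → ℤ) := Fintype.piFinset fun _ : Fin n => Finset.Icc (-(k : ℤ)) (k : ℤ)
    with hΩdef
  have memΩ : ∀ σ : Fin n → ℤ, σ ∈ Ω ↔ ∀ i, |σ i| ≤ (k : ℤ) := by
    intro σ
    simp [hΩdef, Fintype.mem_piFinset, Finset.mem_Icc, abs_le]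
  set S := Ω.filter (fun σ => Proper G k σ) with hSdef
  have hmemS : ∀ σ, σ ∈ S ↔ Proper G k σ := by
    intro σ
    rw [hSdef, Finset.mem_filter]
    exact ⟨And.right, fun h => ⟨(memΩ σ).2 h.1, h⟩⟩
  have h1 : chrom G k = S.card := by
    rw [chrom]
    have hc := Nat.card_congr
      (Equiv.subtypeEquivRight (fun σ => (hmemS σ).symm) :
        {σ : Fin n → ℤ // Proper G k σ} ≃ {σ : Fin n → ℤ // σ ∈ S})
    rw [hc, Nat.card_eq_finsetCard]
  have hPF : ∀ σ ∈ S, SChrom.Pset σ ∈ F := by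
    intro σ hσ
    have hprop := (hmemS σ).1 hσ
    rw [hF]
    refine ⟨SChrom.Pset_isFlat σ, fun e hsub => ?_⟩
    have hmem := hsub (SChrom.castR_mem_Pset σ)
    have hpe := hprop.2 e
    cases hedge : G.edge e with
    | full i j s =>
      rw [hedge] at hmem hpe
      have hm : SChrom.castR σ i = if s then SChrom.castR σ j else -SChrom.castR σ j := hmem
      have hpe' : σ i ≠ if s then σ j else -σ j := hpe
      apply hpe'
      cases s
      · simp only [Bool.false_eq_true, if_false, SChrom.castR_apply] at hm ⊢
        exact_mod_cast hm
      · simp only [if_true, SChrom.castR_apply] at hm ⊢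
        exact_mod_cast hm
    | half i s =>
      rw [hedge] at hmem hpe
      have hm : SChrom.castR σ i = 0 := hmem
      have hpe' : σ i ≠ 0 := hpe
      apply hpe'
      simp only [SChrom.castR_apply] at hm
      exact_mod_cast hm
    | free =>
      rw [hedge] at hpe
      exact hpe
  rw [h1, Finset.card_eq_sum_card_fiberwise hPF]
  refine Finset.sum_congr rfl fun p hp => ?_
  have hpflat := ((hF p).1 hp).1
  have hpnsub := ((hF p).1 hp).2
  have hfib : S.filter (fun σ => SChrom.Pset σ = p) = Ω.filter (fun σ => SChrom.Good p σ) := by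
    ext σ
    simp only [Finset.mem_filter]
    constructor
    · rintro ⟨hSσ, hps⟩
      exact ⟨(memΩ σ).2 ((hmemS σ).1 hSσ).1, (SChrom.Pset_eq_iff hpflat).1 hps⟩
    · rintro ⟨hΩσ, hgood⟩
      have hps : SChrom.Pset σ = p := (SChrom.Pset_eq_iff hpflat).2 hgood
      refine ⟨(hmemS σ).2 ⟨(memΩ σ).1 hΩσ, fun e => ?_⟩, hps⟩
      cases hedge : G.edge e with
      | full i j s =>
        show σ i ≠ if s then σ j else -σ j
        intro heq
        apply hpnsub e
        rw [hedge, ← hps]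
        intro x hx
        obtain ⟨A, B⟩ := SChrom.mem_Pset.1 hx
        show x i = if s then x j else -x j
        cases s
        · simp only [Bool.false_eq_true, if_false] at heq ⊢
          exact B i j heq
        · simp only [if_true] at heq ⊢
          exact A i j heq
      | half i s =>
        show σ i ≠ 0
        intro h0
        apply hpnsub e
        rw [hedge, ← hps]
        intro x hx
        obtain ⟨A, B⟩ := SChrom.mem_Pset.1 hx
        have := B i i (by omega)
        show x i = 0
        linarith
      | free => exact absurd hedge (hG e).2
  rw [hfib, SChrom.rank_eq hpflat, hΩdef]
  exact SChrom.count_good p k
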